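/- arXiv:2012.05519 — 3 statements merged into one kernel-verified Lean document; each statement's English description precedes it below -/
import Mathlib

section
/- For any real numbers q₁ ≤ q₂, the difference of expected costs satisfies E[C(q₂,D)] − E[C(q₁,D)] = ∫_{(q₁,q₂)} ( r^w − b⁻ + (b⁻ − b⁺)·F_D(t) ) dt, where the integral is the Lebesgue integral over the interval (q₁, q₂). -/
open MeasureTheory

private lemma aux_minus (q₁ q₂ x : ℝ) (hq : q₁ ≤ q₂) :
    max (q₂ - x) 0 - max (q₁ - x) 0 = q₂ - max q₁ (min q₂ x) := by
  simp only [max_def, min_def]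
  split_ifs <;> linarith

private lemma aux_plus (q₁ q₂ x : ℝ) (hq : q₁ ≤ q₂) :
    max (x - q₂) 0 - max (x - q₁) 0 = (q₂ - max q₁ (min q₂ x)) - (q₂ - q₁) := by
  simp only [max_def, min_def]
  split_ifs <;> linarith

private lemma aux_nonneg (q₁ q₂ x : ℝ) (hq : q₁ ≤ q₂) :
    0 ≤ q₂ - max q₁ (min q₂ x) :=
  sub_nonneg.2 (max_le hq (min_le_left _ _))

private lemma aux_vol (q₁ q₂ d : ℝ) (hq : q₁ ≤ q₂) :
    MeasureTheory.volume (Set.Ici d ∩ Set.Ioo q₁ q₂)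
      = ENNReal.ofReal (q₂ - max q₁ (min q₂ d)) := by
  rcases le_or_gt d q₁ with h1 | h1
  · have hset : Set.Ici d ∩ Set.Ioo q₁ q₂ = Set.Ioo q₁ q₂ := by
      apply Set.inter_eq_right.mpr
      intro t ht
      exact h1.trans ht.1.le
    rw [hset, Real.volume_Ioo, min_eq_right (h1.trans hq), max_eq_left h1]
  · rcases le_or_gt d q₂ with h2 | h2
    · have hset : Set.Ici d ∩ Set.Ioo q₁ q₂ = Set.Ico d q₂ := by
        ext t
        simp only [Set.mem_inter_iff, Set.mem_Ici, Set.mem_Ioo, Set.mem_Ico]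
        constructor
        · rintro ⟨h, _, h'⟩; exact ⟨h, h'⟩
        · rintro ⟨h, h'⟩; exact ⟨h, h1.trans_le h, h'⟩
      rw [hset, Real.volume_Ico, min_eq_right h2, max_eq_right h1.le]
    · have hset : Set.Ici d ∩ Set.Ioo q₁ q₂ = ∅ := by
        ext t
        simp only [Set.mem_inter_iff, Set.mem_Ici, Set.mem_Ioo, Set.mem_empty_iff_false,
          iff_false]
        rintro ⟨h, -, h''⟩
        linarith
      rw [hset, measure_empty, min_eq_left h2.le, max_eq_right hq, sub_self,
        ENNReal.ofReal_zero]

/-- Fubini key lemma: the integral of the CDF over `(q₁, q₂)` equals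
`E[q₂ - max q₁ (min q₂ D)]`. -/
private lemma key_fubini {Ω : Type*} [MeasurableSpace Ω] (P : Measure Ω)
    [IsProbabilityMeasure P] (D' : Ω → ℝ) (hD' : Measurable D')
    (q₁ q₂ : ℝ) (hq : q₁ ≤ q₂) :
    ∫ t in Set.Ioo q₁ q₂, (P {ω | D' ω ≤ t}).toReal
      = ∫ ω, (q₂ - max q₁ (min q₂ (D' ω))) ∂P := by
  set S : Set (ℝ × Ω) := {p | D' p.2 ≤ p.1} with hS_def
  have hS : MeasurableSet S := measurableSet_le (hD'.comp measurable_snd) measurable_fst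
  have h1 : ∀ t, ∫⁻ ω, S.indicator 1 (t, ω) ∂P = P {ω | D' ω ≤ t} := by
    intro t
    have heq : (fun ω => S.indicator (1 : ℝ × Ω → ENNReal) (t, ω))
        = Set.indicator {ω | D' ω ≤ t} 1 := by
      ext ω
      by_cases h : D' ω ≤ t <;> simp [hS_def, Set.indicator, h]
    rw [heq]
    exact lintegral_indicator_one (measurableSet_le hD' measurable_const)
  have h2 : ∀ ω, ∫⁻ t in Set.Ioo q₁ q₂, S.indicator 1 (t, ω)
      = ENNReal.ofReal (q₂ - max q₁ (min q₂ (D' ω))) := by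
    intro ω
    have heq : (fun t => S.indicator (1 : ℝ × Ω → ENNReal) (t, ω))
        = Set.indicator (Set.Ici (D' ω)) 1 := by
      ext t
      by_cases h : D' ω ≤ t <;> simp [hS_def, Set.indicator, h, Set.mem_Ici]
    rw [heq, lintegral_indicator_one measurableSet_Ici,
      Measure.restrict_apply measurableSet_Ici, aux_vol q₁ q₂ (D' ω) hq]
  have hswap : ∫⁻ t in Set.Ioo q₁ q₂, ∫⁻ ω, S.indicator 1 (t, ω) ∂P
      = ∫⁻ ω, (∫⁻ t in Set.Ioo q₁ q₂, S.indicator 1 (t, ω)) ∂P := by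
    exact lintegral_lintegral_swap
      (f := fun t ω => S.indicator 1 (t, ω))
      (show AEMeasurable _ _ from (measurable_one.indicator hS).aemeasurable)
  have hmono : Monotone fun t => P {ω | D' ω ≤ t} := by
    intro a b hab
    exact measure_mono fun ω h => le_trans h hab
  have hleft : ∫ t in Set.Ioo q₁ q₂, (P {ω | D' ω ≤ t}).toReal
      = (∫⁻ t in Set.Ioo q₁ q₂, P {ω | D' ω ≤ t}).toReal := by
    refine integral_toReal (hmono.measurable.aemeasurable) ?_
    filter_upwards with t using measure_lt_top _ _
  have hright : ∫ ω, (q₂ - max q₁ (min q₂ (D' ω))) ∂P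
      = (∫⁻ ω, ENNReal.ofReal (q₂ - max q₁ (min q₂ (D' ω))) ∂P).toReal := by
    rw [← integral_toReal]
    · refine integral_congr_ae ?_
      filter_upwards with ω
      rw [ENNReal.toReal_ofReal (aux_nonneg q₁ q₂ (D' ω) hq)]
    · exact (ENNReal.measurable_ofReal.comp
        ((measurable_const.sub ((measurable_const.max
          (measurable_const.min hD')).comp measurable_id)))).aemeasurable
    · filter_upwards with ω using ENNReal.ofReal_lt_top
  rw [hleft, hright]
  congr 1
  calc ∫⁻ t in Set.Ioo q₁ q₂, P {ω | D' ω ≤ t}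
      = ∫⁻ t in Set.Ioo q₁ q₂, ∫⁻ ω, S.indicator 1 (t, ω) ∂P := by
        simp_rw [h1]
    _ = ∫⁻ ω, (∫⁻ t in Set.Ioo q₁ q₂, S.indicator 1 (t, ω)) ∂P := hswap
    _ = ∫⁻ ω, ENNReal.ofReal (q₂ - max q₁ (min q₂ (D' ω))) ∂P := by
        simp_rw [h2]

/-- For `q₁ ≤ q₂`,
`E[C(q₂,D)] − E[C(q₁,D)] = ∫_{(q₁,q₂)} (r^w − b⁻ + (b⁻ − b⁺)·F_D(t)) dt`. -/
theorem expected_cost_difference_eq_integral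
    {Ω : Type*} [MeasurableSpace Ω] (P : Measure Ω) [IsProbabilityMeasure P]
    (D : Ω → ℝ) (hD : Integrable D P)
    (F : ℝ → ℝ) (hF : ∀ t, F t = (P {ω | D ω ≤ t}).toReal)
    (rw0 bm bp : ℝ)
    (C : ℝ → Ω → ℝ)
    (hC : ∀ q ω, C q ω
      = rw0 * q + bm * max (D ω - q) 0 - bp * max (q - D ω) 0)
    (q₁ q₂ : ℝ) (hq : q₁ ≤ q₂) :
    (∫ ω, C q₂ ω ∂P) - (∫ ω, C q₁ ω ∂P)
      = ∫ t in Set.Ioo q₁ q₂, (rw0 - bm + (bm - bp) * F t) := by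
  -- measurable modification of D
  obtain ⟨D', hD'meas, hae⟩ : ∃ D' : Ω → ℝ, Measurable D' ∧ D =ᵐ[P] D' :=
    ⟨hD.1.aemeasurable.mk D, hD.1.aemeasurable.measurable_mk, hD.1.aemeasurable.ae_eq_mk⟩
  have hcdf : ∀ t, P {ω | D ω ≤ t} = P {ω | D' ω ≤ t} := by
    intro t
    apply measure_congr
    filter_upwards [hae] with ω h
    show (D ω ≤ t) = (D' ω ≤ t)
    rw [h]
  -- integrability facts
  have hg : ∀ q : ℝ, Integrable (fun ω => max (D ω - q) 0) P :=
    fun q => (hD.sub (integrable_const q)).pos_part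
  have hh : ∀ q : ℝ, Integrable (fun ω => max (q - D ω) 0) P :=
    fun q => ((integrable_const q).sub hD).pos_part
  have hKint : Integrable (fun ω => q₂ - max q₁ (min q₂ (D ω))) P := by
    refine ((hh q₂).sub (hh q₁)).congr ?_
    filter_upwards with ω using aux_minus q₁ q₂ (D ω) hq
  -- expected cost formula
  have hCq : ∀ q : ℝ, ∫ ω, C q ω ∂P
      = rw0 * q + bm * ∫ ω, max (D ω - q) 0 ∂P - bp * ∫ ω, max (q - D ω) 0 ∂P := by
    intro q
    have : (fun ω => C q ω)
        = fun ω => rw0 * q + bm * max (D ω - q) 0 - bp * max (q - D ω) 0 := by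
      ext ω; exact hC q ω
    rw [this, integral_sub
      (show Integrable (fun ω => rw0 * q + bm * max (D ω - q) 0) P from
        (integrable_const _).add ((hg q).const_mul bm))
      (show Integrable (fun ω => bp * max (q - D ω) 0) P from (hh q).const_mul bp),
      integral_add (integrable_const _)
      (show Integrable (fun ω => bm * max (D ω - q) 0) P from (hg q).const_mul bm),
      integral_const, integral_const_mul, integral_const_mul]
    simp
  -- differences of the pos-parts
  have hdiff_g : (∫ ω, max (D ω - q₂) 0 ∂P) - ∫ ω, max (D ω - q₁) 0 ∂P
      = (∫ ω, (q₂ - max q₁ (min q₂ (D ω))) ∂P) - (q₂ - q₁) := by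
    have hcg : ∫ ω, (max (D ω - q₂) 0 - max (D ω - q₁) 0) ∂P
        = ∫ ω, ((q₂ - max q₁ (min q₂ (D ω))) - (q₂ - q₁)) ∂P := by
      refine integral_congr_ae ?_
      filter_upwards with ω using aux_plus q₁ q₂ (D ω) hq
    rw [← integral_sub (hg q₂) (hg q₁), hcg,
      integral_sub hKint (integrable_const _), integral_const]
    simp
  have hdiff_h : (∫ ω, max (q₂ - D ω) 0 ∂P) - ∫ ω, max (q₁ - D ω) 0 ∂P
      = ∫ ω, (q₂ - max q₁ (min q₂ (D ω))) ∂P := by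
    rw [← integral_sub (hh q₂) (hh q₁)]
    refine integral_congr_ae ?_
    filter_upwards with ω using aux_minus q₁ q₂ (D ω) hq
  -- F is monotone, measurable and bounded
  have hFmono : Monotone F := by
    intro a b hab
    rw [hF, hF]
    exact ENNReal.toReal_mono (measure_ne_top _ _)
      (measure_mono fun ω h => le_trans h hab)
  have hFint : IntegrableOn F (Set.Ioo q₁ q₂) := by
    refine Integrable.mono' (integrable_const 1)
      hFmono.measurable.aestronglyMeasurable.restrict ?_
    filter_upwards with t
    rw [hF, Real.norm_eq_abs, abs_of_nonneg ENNReal.toReal_nonneg]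
    simpa using ENNReal.toReal_mono (measure_ne_top P Set.univ)
      (measure_mono (Set.subset_univ _))
  -- the key identity for ∫ F
  have hFI : ∫ t in Set.Ioo q₁ q₂, F t
      = ∫ ω, (q₂ - max q₁ (min q₂ (D ω))) ∂P := by
    have h1 : ∫ t in Set.Ioo q₁ q₂, F t
        = ∫ t in Set.Ioo q₁ q₂, (P {ω | D' ω ≤ t}).toReal := by
      refine integral_congr_ae ?_
      filter_upwards with t
      rw [hF, hcdf]
    have h2 : ∫ ω, (q₂ - max q₁ (min q₂ (D' ω))) ∂P
        = ∫ ω, (q₂ - max q₁ (min q₂ (D ω))) ∂P := by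
      refine integral_congr_ae ?_
      filter_upwards [hae] with ω h
      rw [h]
    rw [h1, key_fubini P D' hD'meas q₁ q₂ hq, h2]
  -- split the RHS integral
  have hRHS : ∫ t in Set.Ioo q₁ q₂, (rw0 - bm + (bm - bp) * F t)
      = (rw0 - bm) * (q₂ - q₁) + (bm - bp) * ∫ t in Set.Ioo q₁ q₂, F t := by
    rw [integral_add (integrable_const _) (hFint.const_mul _), integral_const,
      integral_const_mul]
    simp [Real.volume_Ioo, ENNReal.toReal_ofReal (sub_nonneg.2 hq), mul_comm, hq]
  rw [hRHS, hFI, hCq q₁, hCq q₂]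
  have e1 := hdiff_g
  have e2 := hdiff_h
  set I := ∫ ω, (q₂ - max q₁ (min q₂ (D ω))) ∂P
  set A₂ := ∫ ω, max (D ω - q₂) 0 ∂P
  set A₁ := ∫ ω, max (D ω - q₁) 0 ∂P
  set B₂ := ∫ ω, max (q₂ - D ω) 0 ∂P
  set B₁ := ∫ ω, max (q₁ - D ω) 0 ∂P
  linear_combination bm * e1 - bp * e2
end

section
/- Suppose the cumulative distribution function F_D is continuous at the point q ∈ ℝ. Then the expected-cost function g(q) = E[C(q,D)] is differentiable at q with derivative g′(q) = r^w − b⁻·(1 − F_D(q)) − b⁺·F_D(q). -/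
open MeasureTheory

lemma aux_integrable_max {Ω : Type*} [MeasurableSpace Ω] (P : Measure Ω)
    [IsProbabilityMeasure P] (D : Ω → ℝ) (hD : Integrable D P) (a : ℝ) :
    Integrable (fun ω => max (a - D ω) 0) P :=
  ((integrable_const a).sub hD).pos_part

lemma aux_key {Ω : Type*} [MeasurableSpace Ω] (P : Measure Ω)
    [IsProbabilityMeasure P] (D : Ω → ℝ) (hDm : Measurable D)
    (hD : Integrable D P) {a b : ℝ} (hab : a ≤ b) :
    (b - a) * (P {ω | D ω ≤ a}).toReal
      ≤ (∫ ω, max (b - D ω) 0 ∂P) - ∫ ω, max (a - D ω) 0 ∂P ∧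
    (∫ ω, max (b - D ω) 0 ∂P) - (∫ ω, max (a - D ω) 0 ∂P)
      ≤ (b - a) * (P {ω | D ω ≤ b}).toReal := by
  have hma := aux_integrable_max P D hD a
  have hmb := aux_integrable_max P D hD b
  have hsub : (∫ ω, max (b - D ω) 0 ∂P) - (∫ ω, max (a - D ω) 0 ∂P)
      = ∫ ω, (max (b - D ω) 0 - max (a - D ω) 0) ∂P :=
    (integral_sub hmb hma).symm
  have hmsa : MeasurableSet {ω | D ω ≤ a} := hDm measurableSet_Iic
  have hmsb : MeasurableSet {ω | D ω ≤ b} := hDm measurableSet_Iic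
  constructor
  · rw [hsub]
    have h1 : ∀ ω, Set.indicator {ω | D ω ≤ a} (fun _ => b - a) ω
        ≤ max (b - D ω) 0 - max (a - D ω) 0 := by
      intro ω
      by_cases h : D ω ≤ a
      · have hmem : ω ∈ {ω | D ω ≤ a} := h
        rw [Set.indicator_of_mem hmem]
        rw [max_eq_left (by linarith : (0:ℝ) ≤ b - D ω),
          max_eq_left (by linarith : (0:ℝ) ≤ a - D ω)]
        linarith
      · have hmem : ω ∉ {ω | D ω ≤ a} := h
        rw [Set.indicator_of_notMem hmem]
        push_neg at h
        rw [max_eq_right (by linarith : a - D ω ≤ 0)]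
        simp [le_max_right]
    calc (b - a) * (P {ω | D ω ≤ a}).toReal
        = ∫ ω, Set.indicator {ω | D ω ≤ a} (fun _ => b - a) ω ∂P := by
          rw [integral_indicator_const (b - a) hmsa, smul_eq_mul, mul_comm]; rfl
      _ ≤ _ := integral_mono ((integrable_const (b-a)).indicator hmsa)
          (hmb.sub hma) h1
  · rw [hsub]
    have h1 : ∀ ω, max (b - D ω) 0 - max (a - D ω) 0
        ≤ Set.indicator {ω | D ω ≤ b} (fun _ => b - a) ω := by
      intro ω
      by_cases h : D ω ≤ b
      · have hmem : ω ∈ {ω | D ω ≤ b} := h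
        rw [Set.indicator_of_mem hmem]
        rw [max_eq_left (by linarith : (0:ℝ) ≤ b - D ω)]
        have := le_max_right (a - D ω) (0:ℝ)
        have := le_max_left (a - D ω) (0:ℝ)
        linarith
      · have hmem : ω ∉ {ω | D ω ≤ b} := h
        rw [Set.indicator_of_notMem hmem]
        push_neg at h
        rw [max_eq_right (by linarith : b - D ω ≤ 0),
          max_eq_right (by linarith : a - D ω ≤ 0)]
        simp
    calc (∫ ω, (max (b - D ω) 0 - max (a - D ω) 0) ∂P)
        ≤ ∫ ω, Set.indicator {ω | D ω ≤ b} (fun _ => b - a) ω ∂P :=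
          integral_mono (hmb.sub hma)
            ((integrable_const (b-a)).indicator hmsb) h1
      _ = (b - a) * (P {ω | D ω ≤ b}).toReal := by
          rw [integral_indicator_const (b - a) hmsb, smul_eq_mul, mul_comm]; rfl

lemma aux_hasDerivAt {Ω : Type*} [MeasurableSpace Ω] (P : Measure Ω)
    [IsProbabilityMeasure P] (D : Ω → ℝ) (hDm : Measurable D)
    (hD : Integrable D P) (q : ℝ)
    (hcont : ContinuousAt (fun t => (P {ω | D ω ≤ t}).toReal) q) :
    HasDerivAt (fun a => ∫ ω, max (a - D ω) 0 ∂P)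
      ((P {ω | D ω ≤ q}).toReal) q := by
  set F : ℝ → ℝ := fun t => (P {ω | D ω ≤ t}).toReal with hFdef
  set H : ℝ → ℝ := fun a => ∫ ω, max (a - D ω) 0 ∂P with hHdef
  rw [hasDerivAt_iff_tendsto_slope]
  have hbound : ∀ x ∈ ({q}ᶜ : Set ℝ),
      min (F x) (F q) ≤ slope H q x ∧ slope H q x ≤ max (F x) (F q) := by
    intro x hx
    have hx' : x ≠ q := hx
    rw [slope_def_field]
    rcases lt_or_gt_of_ne hx' with h | h
    · -- x < q
      obtain ⟨hlo, hhi⟩ := aux_key P D hDm hD (le_of_lt h)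
      have hpos : 0 < q - x := by linarith
      have hslope : (H x - H q) / (x - q) = (H q - H x) / (q - x) := by
        rw [div_eq_div_iff (by linarith) (by linarith)]; ring
      constructor
      · rw [hslope, le_div_iff₀ hpos]
        calc min (F x) (F q) * (q - x) ≤ F x * (q - x) :=
              mul_le_mul_of_nonneg_right (min_le_left _ _) hpos.le
          _ ≤ H q - H x := by rw [mul_comm]; exact hlo
      · rw [hslope, div_le_iff₀ hpos]
        calc H q - H x ≤ (q - x) * F q := hhi
          _ ≤ max (F x) (F q) * (q - x) := by
              rw [mul_comm]
              exact mul_le_mul_of_nonneg_right (le_max_right _ _) hpos.le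
    · -- q < x
      obtain ⟨hlo, hhi⟩ := aux_key P D hDm hD (le_of_lt h)
      have hpos : 0 < x - q := by linarith
      constructor
      · rw [le_div_iff₀ hpos]
        calc min (F x) (F q) * (x - q) ≤ F q * (x - q) :=
              mul_le_mul_of_nonneg_right (min_le_right _ _) hpos.le
          _ ≤ H x - H q := by rw [mul_comm]; exact hlo
      · rw [div_le_iff₀ hpos]
        calc H x - H q ≤ (x - q) * F x := hhi
          _ ≤ max (F x) (F q) * (x - q) := by
              rw [mul_comm]
              exact mul_le_mul_of_nonneg_right (le_max_left _ _) hpos.le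
  have hmem : ∀ᶠ x in nhdsWithin q ({q}ᶜ : Set ℝ), x ∈ ({q}ᶜ : Set ℝ) :=
    eventually_mem_nhdsWithin
  have hlo : Filter.Tendsto (fun x => min (F x) (F q)) (nhdsWithin q ({q}ᶜ : Set ℝ))
      (nhds (F q)) := by
    have : Filter.Tendsto (fun x => min (F x) (F q)) (nhds q) (nhds (min (F q) (F q))) :=
      (hcont.tendsto.min tendsto_const_nhds)
    simpa using this.mono_left nhdsWithin_le_nhds
  have hhi : Filter.Tendsto (fun x => max (F x) (F q)) (nhdsWithin q ({q}ᶜ : Set ℝ))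
      (nhds (F q)) := by
    have : Filter.Tendsto (fun x => max (F x) (F q)) (nhds q) (nhds (max (F q) (F q))) :=
      (hcont.tendsto.max tendsto_const_nhds)
    simpa using this.mono_left nhdsWithin_le_nhds
  exact tendsto_of_tendsto_of_tendsto_of_le_of_le' hlo hhi
    (hmem.mono fun x hx => (hbound x hx).1)
    (hmem.mono fun x hx => (hbound x hx).2)

/-- If the CDF `F_D` is continuous at `q`, then the expected-cost
function `g(q) = E[C(q,D)]` is differentiable at `q` with derivative
`g′(q) = r^w − b⁻·(1 − F_D(q)) − b⁺·F_D(q)`. -/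
theorem expected_cost_hasDerivAt
    {Ω : Type*} [MeasurableSpace Ω] (P : Measure Ω) [IsProbabilityMeasure P]
    (D : Ω → ℝ) (hD : Integrable D P)
    (F : ℝ → ℝ) (hF : ∀ t, F t = (P {ω | D ω ≤ t}).toReal)
    (rw0 bm bp : ℝ)
    (C : ℝ → Ω → ℝ)
    (hC : ∀ q ω, C q ω
      = rw0 * q + bm * max (D ω - q) 0 - bp * max (q - D ω) 0)
    (g : ℝ → ℝ) (hg : ∀ q, g q = ∫ ω, C q ω ∂P)
    (q : ℝ) (hcont : ContinuousAt F q) :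
    HasDerivAt g (rw0 - bm * (1 - F q) - bp * F q) q := by
  classical
  set D' : Ω → ℝ := hD.1.mk D with hD'def
  have hD'm : Measurable D' := hD.1.measurable_mk
  have hDD' : D =ᵐ[P] D' := hD.1.ae_eq_mk
  have hD' : Integrable D' P := hD.congr hDD'
  have hsets : ∀ t, P {ω | D ω ≤ t} = P {ω | D' ω ≤ t} := by
    intro t
    refine measure_congr ?_
    filter_upwards [hDD'] with ω hω
    have : (D ω ≤ t) = (D' ω ≤ t) := by rw [hω]
    exact this
  have hF' : ∀ t, F t = (P {ω | D' ω ≤ t}).toReal := by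
    intro t; rw [hF t, hsets t]
  have hcont' : ContinuousAt (fun t => (P {ω | D' ω ≤ t}).toReal) q := by
    have : F = fun t => (P {ω | D' ω ≤ t}).toReal := funext hF'
    rwa [this] at hcont
  set H : ℝ → ℝ := fun a => ∫ ω, max (a - D' ω) 0 ∂P with hHdef
  have hH : HasDerivAt H (F q) q := by
    rw [hF' q]
    exact aux_hasDerivAt P D' hD'm hD' q hcont'
  set μ : ℝ := ∫ ω, D' ω ∂P with hμdef
  have hgeq : g = fun a => rw0 * a + bm * (μ - a) + (bm - bp) * H a := by
    funext a
    rw [hg a]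
    have e1 : (∫ ω, C a ω ∂P)
        = ∫ ω, (rw0 * a + bm * (D' ω - a) + (bm - bp) * max (a - D' ω) 0) ∂P := by
      apply integral_congr_ae
      filter_upwards [hDD'] with ω hω
      rw [hC a ω, hω]
      rcases le_total (D' ω) a with h | h
      · rw [max_eq_right (by linarith : D' ω - a ≤ 0),
          max_eq_left (by linarith : (0:ℝ) ≤ a - D' ω)]
        ring
      · rw [max_eq_left (by linarith : (0:ℝ) ≤ D' ω - a),
          max_eq_right (by linarith : a - D' ω ≤ 0)]
        ring
    rw [e1]
    have i1 : Integrable (fun ω => bm * (D' ω - a)) P :=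
      (hD'.sub (integrable_const a)).const_mul bm
    have i2 : Integrable (fun ω => (bm - bp) * max (a - D' ω) 0) P :=
      (aux_integrable_max P D' hD' a).const_mul (bm - bp)
    have i0 : Integrable (fun ω => rw0 * a + bm * (D' ω - a)) P :=
      (integrable_const _).add i1
    rw [integral_add i0 i2, integral_add (integrable_const _) i1,
      integral_const, integral_const_mul, integral_const_mul,
      integral_sub hD' (integrable_const a), integral_const]
    simp [hμdef, hHdef]
  rw [hgeq]
  have h1 : HasDerivAt (fun a => rw0 * a) rw0 q := by
    simpa using (hasDerivAt_id q).const_mul rw0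
  have h2 : HasDerivAt (fun a => bm * (μ - a)) (bm * (-1)) q := by
    exact HasDerivAt.const_mul bm (HasDerivAt.const_sub μ (hasDerivAt_id q))
  have h3 : HasDerivAt (fun a => (bm - bp) * H a) ((bm - bp) * F q) q :=
    HasDerivAt.const_mul (bm - bp) hH
  have := (h1.add h2).add h3
  refine this.congr_deriv ?_
  ring
end

section
/- Assume b⁻ ≥ r^w, r^w ≥ b⁺, and b⁻ > b⁺, and let γ = (b⁻ − r^w)/(b⁻ − b⁺). If q* ∈ ℝ satisfies F_D(q*) = γ, then q* minimizes the expected cost: for every q ∈ ℝ, E[C(q*,D)] ≤ E[C(q,D)]. -/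
open MeasureTheory

lemma newsvendor_pointwise_key (d qs q rw0 bm bp : ℝ) (h3 : bp < bm) :
    rw0 * qs + bm * max (d - qs) 0 - bp * max (qs - d) 0 ≤
    rw0 * q + bm * max (d - q) 0 - bp * max (q - d) 0
      + (qs - q) * ((rw0 - bm) + (bm - bp) * (if d ≤ qs then (1:ℝ) else 0)) := by
  rcases le_or_gt d qs with h | h
  · rw [if_pos h, max_eq_right (by linarith : d - qs ≤ 0),
      max_eq_left (by linarith : (0:ℝ) ≤ qs - d)]
    rcases le_or_gt d q with h' | h'
    · rw [max_eq_right (by linarith : d - q ≤ 0),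
        max_eq_left (by linarith : (0:ℝ) ≤ q - d)]
      nlinarith
    · rw [max_eq_left (by linarith : (0:ℝ) ≤ d - q),
        max_eq_right (by linarith : q - d ≤ 0)]
      nlinarith
  · rw [if_neg (not_le.mpr h), max_eq_left (by linarith : (0:ℝ) ≤ d - qs),
      max_eq_right (by linarith : qs - d ≤ 0)]
    rcases le_or_gt d q with h' | h'
    · rw [max_eq_right (by linarith : d - q ≤ 0),
        max_eq_left (by linarith : (0:ℝ) ≤ q - d)]
      nlinarith
    · rw [max_eq_left (by linarith : (0:ℝ) ≤ d - q),
        max_eq_right (by linarith : q - d ≤ 0)]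
      nlinarith

/-- Assuming `b⁻ ≥ r^w`, `r^w ≥ b⁺` and `b⁻ > b⁺`, with cost
ratio `γ = (b⁻ − r^w)/(b⁻ − b⁺)`, any `q*` with `F_D(q*) = γ` minimizes the
expected cost. -/
theorem cost_ratio_quantile_minimizes_expected_cost
    {Ω : Type*} [MeasurableSpace Ω] (P : Measure Ω) [IsProbabilityMeasure P]
    (D : Ω → ℝ) (hD : Integrable D P)
    (F : ℝ → ℝ) (hF : ∀ t, F t = (P {ω | D ω ≤ t}).toReal)
    (rw0 bm bp : ℝ) (h1 : rw0 ≤ bm) (h2 : bp ≤ rw0) (h3 : bp < bm)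
    (γ : ℝ) (hγ : γ = (bm - rw0) / (bm - bp))
    (C : ℝ → Ω → ℝ)
    (hC : ∀ q ω, C q ω
      = rw0 * q + bm * max (D ω - q) 0 - bp * max (q - D ω) 0)
    (qs : ℝ) (hqs : F qs = γ) :
    ∀ q : ℝ, ∫ ω, C qs ω ∂P ≤ ∫ ω, C q ω ∂P := by
  intro q
  obtain ⟨D', hD'meas, hDD'⟩ :
      ∃ D' : Ω → ℝ, Measurable D' ∧ D =ᵐ[P] D' :=
    ⟨hD.aestronglyMeasurable.mk D,
      hD.aestronglyMeasurable.stronglyMeasurable_mk.measurable,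
      hD.aestronglyMeasurable.ae_eq_mk⟩
  set s : Set Ω := {ω | D' ω ≤ qs} with hs
  have hsmeas : MeasurableSet s := measurableSet_le hD'meas measurable_const
  have hPs : (P s).toReal = γ := by
    have hset : P {ω | D ω ≤ qs} = P s := by
      apply measure_congr
      filter_upwards [hDD'] with ω hω
      show (D ω ≤ qs) = (D' ω ≤ qs)
      rw [hω]
    rw [← hqs, hF, hset]
  set h : Ω → ℝ := fun ω =>
    (qs - q) * ((rw0 - bm) + (bm - bp) * s.indicator (fun _ => (1:ℝ)) ω) with hh
  have hCint : ∀ r : ℝ, Integrable (fun ω => C r ω) P := by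
    intro r
    have h1' : Integrable (fun ω => max (D ω - r) 0) P :=
      (hD.sub (integrable_const r)).pos_part
    have h2' : Integrable (fun ω => max (r - D ω) 0) P :=
      ((integrable_const r).sub hD).pos_part
    have : Integrable (fun ω =>
        rw0 * r + bm * max (D ω - r) 0 - bp * max (r - D ω) 0) P :=
      ((integrable_const (rw0 * r)).add (h1'.const_mul bm)).sub (h2'.const_mul bp)
    exact this.congr (Filter.Eventually.of_forall fun ω => (hC r ω).symm)
  have hindint : Integrable (fun ω => s.indicator (fun _ => (1:ℝ)) ω) P :=
    (integrable_const 1).indicator hsmeas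
  have hhint : Integrable h P := by
    apply Integrable.const_mul
    exact (integrable_const (rw0 - bm)).add (hindint.const_mul _)
  have hind : ∫ ω, s.indicator (fun _ => (1:ℝ)) ω ∂P = (P s).toReal := by
    rw [integral_indicator_const (1:ℝ) hsmeas]; simp; rfl
  have hint_h : ∫ ω, h ω ∂P = 0 := by
    have hbmbp : bm - bp ≠ 0 := by linarith
    simp only [hh]
    rw [integral_const_mul, integral_add (integrable_const _) (hindint.const_mul _),
      integral_const_mul, hind, hPs, hγ]
    field_simp
    rw [integral_const, probReal_univ, one_smul]; ring
  have hptwise : ∀ᵐ ω ∂P, C qs ω ≤ C q ω + h ω := by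
    filter_upwards [hDD'] with ω hω
    have hindω : s.indicator (fun _ => (1:ℝ)) ω = if D ω ≤ qs then (1:ℝ) else 0 := by
      rw [hω]
      by_cases hle : D' ω ≤ qs <;> simp [hs, Set.indicator, hle]
    rw [hC, hC]
    simp only [hh]
    rw [hindω]
    exact newsvendor_pointwise_key (D ω) qs q rw0 bm bp h3
  calc ∫ ω, C qs ω ∂P ≤ ∫ ω, (C q ω + h ω) ∂P :=
        integral_mono_ae (hCint qs) ((hCint q).add hhint) hptwise
    _ = ∫ ω, C q ω ∂P + ∫ ω, h ω ∂P := integral_add (hCint q) hhint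
    _ = ∫ ω, C q ω ∂P := by rw [hint_h, add_zero]
end
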